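/- arXiv:2001.11598 — 2 statements merged into one kernel-verified Lean document; each statement's English description precedes it below -/
import Mathlib

section
/- Let A : ℝ → ℝ be continuous and strictly positive. Then 2 ∫_0^∞ ∫_0^∞ exp(−2 ∫_y^{y+z} A(u) du) dz dy ≤ ∫_0^∞ 1/A(y) dy. In particular if ∫_0^∞ 1/A < ∞ the double integral is finite. -/
open Real MeasureTheory Set ENNReal

set_option maxHeartbeats 1000000

theorem stmt10 (A : ℝ → ℝ) (hA : Continuous A) (hpos : ∀ y, 0 < A y) :
    2 * (∫⁻ y in Set.Ioi (0 : ℝ), ∫⁻ z in Set.Ioi (0 : ℝ),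
          ENNReal.ofReal (Real.exp (-2 * ∫ u in y..(y + z), A u)))
        ≤ ∫⁻ y in Set.Ioi (0 : ℝ), ENNReal.ofReal (A y)⁻¹ ∧
      ((∫⁻ y in Set.Ioi (0 : ℝ), ENNReal.ofReal (A y)⁻¹) < ⊤ →
        (∫⁻ y in Set.Ioi (0 : ℝ), ∫⁻ z in Set.Ioi (0 : ℝ),
          ENNReal.ofReal (Real.exp (-2 * ∫ u in y..(y + z), A u))) < ⊤) := by
  -- The primitive of `A`
  obtain ⟨F, hFdef⟩ : ∃ F : ℝ → ℝ, F = fun x => ∫ u in (0:ℝ)..x, A u := ⟨_, rfl⟩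
  have hF : ∀ x, HasDerivAt F (A x) x := by
    intro x; rw [hFdef]; exact (hA.integral_hasStrictDerivAt 0 x).hasDerivAt
  have hFc : Continuous F := by
    rw [continuous_iff_continuousAt]; exact fun x => (hF x).continuousAt
  have hsub : ∀ y x : ℝ, (∫ u in y..x, A u) = F x - F y := by
    intro y x; rw [hFdef]
    exact (intervalIntegral.integral_interval_sub_left (hA.intervalIntegrable 0 x)
      (hA.intervalIntegrable 0 y)).symm
  -- abbreviation for the exponential kernel
  obtain ⟨E, hEdef⟩ : ∃ E : ℝ → ℝ → ℝ, E = fun y x => Real.exp (-2 * (F x - F y)) := ⟨_, rfl⟩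
  have hEapp : ∀ y x, E y x = Real.exp (-2 * (F x - F y)) := by rw [hEdef]; exact fun _ _ => rfl
  have hEc : Continuous fun p : ℝ × ℝ => E p.1 p.2 := by
    rw [hEdef]
    exact Real.continuous_exp.comp
      (continuous_const.mul ((hFc.comp continuous_snd).sub (hFc.comp continuous_fst)))
  have hEpos : ∀ y x, 0 < E y x := by intro y x; rw [hEapp]; exact Real.exp_pos _
  have hEy : ∀ y, Continuous fun x => E y x :=
    fun y => hEc.comp (continuous_const.prodMk continuous_id)
  have hEx : ∀ x, Continuous fun y => E y x :=
    fun x => hEc.comp (continuous_id.prodMk continuous_const)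
  -- FTC computation 1 : integral in the upper endpoint
  have lem1 : ∀ y n : ℝ, ∫ z in (0:ℝ)..n, A (y + z) * E y (y + z) =
      (1/2) - (1/2) * E y (y + n) := by
    intro y n
    have hd : ∀ z ∈ uIcc (0:ℝ) n,
        HasDerivAt (fun z => -(1/2) * E y (y + z)) (A (y + z) * E y (y + z)) z := by
      intro z _
      have h1 : HasDerivAt (fun z => F (y + z)) (A (y + z)) z := by
        have := (hF (y + z)).comp z ((hasDerivAt_id z).const_add y)
        rw [mul_one] at this; exact this
      have h2 : HasDerivAt (fun z => -2 * (F (y + z) - F y)) (-2 * A (y + z)) z :=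
        (h1.sub_const (F y)).const_mul (-2)
      have h3 := (h2.exp).const_mul (-(1/2 : ℝ))
      simp only [hEdef]
      refine h3.congr_deriv ?_
      ring
    have hint : IntervalIntegrable (fun z => A (y + z) * E y (y + z)) volume 0 n := by
      apply Continuous.intervalIntegrable
      exact (hA.comp (continuous_const.add continuous_id)).mul
        ((hEy y).comp (continuous_const.add continuous_id))
    rw [intervalIntegral.integral_eq_sub_of_hasDerivAt hd hint]
    have : E y (y + 0) = 1 := by rw [hEapp]; simp
    rw [this]; ring
  -- FTC computation 2 : integral in the lower endpoint
  have lem2 : ∀ x : ℝ, ∫ y in (0:ℝ)..x, A y * E y x = (1/2) - (1/2) * E 0 x := by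
    intro x
    have hd : ∀ y ∈ uIcc (0:ℝ) x,
        HasDerivAt (fun y => (1/2) * E y x) (A y * E y x) y := by
      intro y _
      have h2 : HasDerivAt (fun y => -2 * (F x - F y)) (2 * A y) y := by
        have := ((hF y).const_sub (F x)).const_mul (-2)
        refine this.congr_deriv ?_; ring
      have h3 := (h2.exp).const_mul (1/2 : ℝ)
      simp only [hEdef]
      refine h3.congr_deriv ?_
      ring
    have hint : IntervalIntegrable (fun y => A y * E y x) volume 0 x :=
      (hA.mul (hEx x)).intervalIntegrable 0 x
    rw [intervalIntegral.integral_eq_sub_of_hasDerivAt hd hint]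
    have : E x x = 1 := by rw [hEapp]; simp
    rw [this]; ring
  set R : ℝ≥0∞ := ∫⁻ y in Ioi (0:ℝ), ENNReal.ofReal (A y)⁻¹ with hRdef
  -- measurability of the two continuous kernels
  have hc1 : Continuous fun p : ℝ × ℝ => A (p.1 + p.2) * E p.1 (p.1 + p.2) / A p.1 := by
    apply Continuous.div
    · exact (hA.comp (continuous_fst.add continuous_snd)).mul
        (hEc.comp (continuous_fst.prodMk (continuous_fst.add continuous_snd)))
    · exact hA.comp continuous_fst
    · exact fun p => (hpos p.1).ne'
  have hc2 : Continuous fun p : ℝ × ℝ => A p.1 * E p.1 p.2 / A p.2 := by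
    apply Continuous.div
    · exact (hA.comp continuous_fst).mul hEc
    · exact hA.comp continuous_snd
    · exact fun p => (hpos p.2).ne'
  -- sup over Ioc helper
  have hUnion : Ioi (0:ℝ) = ⋃ n : ℕ, Ioc (0:ℝ) (n:ℝ) := by
    ext x
    simp only [mem_Ioi, mem_iUnion, mem_Ioc]
    constructor
    · intro hx
      obtain ⟨n, hn⟩ := exists_nat_ge x
      exact ⟨n, hx, hn⟩
    · rintro ⟨n, hn, -⟩; exact hn
  have hdir : Directed (· ⊆ ·) fun n : ℕ => Ioc (0:ℝ) (n:ℝ) := by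
    apply Monotone.directed_le
    intro m n hmn
    exact Ioc_subset_Ioc_right (Nat.cast_le.mpr hmn)
  have hsupIoc : ∀ (f : ℝ → ℝ≥0∞) (c : ℝ≥0∞),
      (∀ n : ℕ, (∫⁻ z in Ioc (0:ℝ) (n:ℝ), f z) ≤ c) → (∫⁻ z in Ioi (0:ℝ), f z) ≤ c := by
    intro f c h
    rw [hUnion, setLIntegral_iUnion_of_directed _ hdir]
    exact iSup_le h
  -- Bound 1: for every `y`, ∫⁻ z in Ioi 0, A(y+z) E ≤ 1/2
  have inner1 : ∀ y : ℝ,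
      (∫⁻ z in Ioi (0:ℝ), ENNReal.ofReal (A (y + z) * E y (y + z))) ≤ ENNReal.ofReal (1/2) := by
    intro y
    apply hsupIoc
    intro n
    have hnn : ∀ z, 0 ≤ A (y + z) * E y (y + z) := fun z => (mul_pos (hpos _) (hEpos _ _)).le
    have hint : IntegrableOn (fun z => A (y + z) * E y (y + z)) (Ioc (0:ℝ) (n:ℝ)) volume := by
      apply Continuous.integrableOn_Ioc
      exact (hA.comp (continuous_const.add continuous_id)).mul
        ((hEy y).comp (continuous_const.add continuous_id))
    rw [← ofReal_integral_eq_lintegral_ofReal hint (ae_of_all _ hnn)]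
    apply ENNReal.ofReal_le_ofReal
    rw [← intervalIntegral.integral_of_le (by positivity : (0:ℝ) ≤ (n:ℝ)), lem1]
    have := (hEpos y (y + n)).le
    linarith
  -- pointwise AM-GM splitting
  have split : ∀ y z : ℝ, (2:ℝ≥0∞) * ENNReal.ofReal (E y (y + z)) ≤
      ENNReal.ofReal (A (y + z) * E y (y + z) / A y) +
      ENNReal.ofReal (A y * E y (y + z) / A (y + z)) := by
    intro y z
    have ha := hpos y
    have hb := hpos (y + z)
    have he := hEpos y (y + z)
    have hkey : 2 * E y (y + z) ≤
        A (y + z) * E y (y + z) / A y + A y * E y (y + z) / A (y + z) := by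
      rw [div_add_div _ _ (ne_of_gt ha) (ne_of_gt hb), le_div_iff₀ (mul_pos ha hb)]
      nlinarith [mul_nonneg he.le (sq_nonneg (A y - A (y + z)))]
    calc (2:ℝ≥0∞) * ENNReal.ofReal (E y (y + z)) = ENNReal.ofReal (2 * E y (y + z)) := by
          rw [ENNReal.ofReal_mul (by norm_num : (0:ℝ) ≤ 2)]
          norm_num
      _ ≤ ENNReal.ofReal (A (y + z) * E y (y + z) / A y + A y * E y (y + z) / A (y + z)) :=
          ENNReal.ofReal_le_ofReal hkey
      _ = _ := ENNReal.ofReal_add (by positivity) (by positivity)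
  -- Term 1 bound
  have term1 : (∫⁻ y in Ioi (0:ℝ), ∫⁻ z in Ioi (0:ℝ),
      ENNReal.ofReal (A (y + z) * E y (y + z) / A y)) ≤ ENNReal.ofReal (1/2) * R := by
    have hstep : ∀ y : ℝ, (∫⁻ z in Ioi (0:ℝ), ENNReal.ofReal (A (y + z) * E y (y + z) / A y))
        ≤ ENNReal.ofReal (1/2) * ENNReal.ofReal (A y)⁻¹ := by
      intro y
      have hrw1 : ∀ z : ℝ, ENNReal.ofReal (A (y + z) * E y (y + z) / A y) =
          ENNReal.ofReal (A (y + z) * E y (y + z)) * ENNReal.ofReal (A y)⁻¹ := by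
        intro z
        rw [div_eq_mul_inv, ENNReal.ofReal_mul' (inv_nonneg.mpr (hpos y).le)]
      calc (∫⁻ z in Ioi (0:ℝ), ENNReal.ofReal (A (y + z) * E y (y + z) / A y))
          = ∫⁻ z in Ioi (0:ℝ),
              ENNReal.ofReal (A (y + z) * E y (y + z)) * ENNReal.ofReal (A y)⁻¹ :=
            lintegral_congr fun z => hrw1 z
        _ = (∫⁻ z in Ioi (0:ℝ), ENNReal.ofReal (A (y + z) * E y (y + z)))
              * ENNReal.ofReal (A y)⁻¹ := lintegral_mul_const' _ _ ENNReal.ofReal_ne_top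
        _ ≤ ENNReal.ofReal (1/2) * ENNReal.ofReal (A y)⁻¹ :=
            mul_le_mul_left (inner1 y) _
    calc (∫⁻ y in Ioi (0:ℝ), ∫⁻ z in Ioi (0:ℝ),
        ENNReal.ofReal (A (y + z) * E y (y + z) / A y))
        ≤ ∫⁻ y in Ioi (0:ℝ), ENNReal.ofReal (1/2) * ENNReal.ofReal (A y)⁻¹ :=
          lintegral_mono hstep
      _ = ENNReal.ofReal (1/2) * R := lintegral_const_mul' _ _ ENNReal.ofReal_ne_top
  -- Term 2 bound (Fubini)
  have term2 : (∫⁻ y in Ioi (0:ℝ), ∫⁻ z in Ioi (0:ℝ),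
      ENNReal.ofReal (A y * E y (y + z) / A (y + z))) ≤ ENNReal.ofReal (1/2) * R := by
    -- translate the inner integral
    have hmx : ∀ y : ℝ, Measurable fun x => ENNReal.ofReal (A y * E y x / A x) :=
      fun y => ((hc2.comp (continuous_const.prodMk continuous_id)).measurable).ennreal_ofReal
    have htrans : ∀ y : ℝ, (∫⁻ z in Ioi (0:ℝ), ENNReal.ofReal (A y * E y (y + z) / A (y + z)))
        = ∫⁻ x in Ioi y, ENNReal.ofReal (A y * E y x / A x) := by
      intro y
      have h : Measure.map (fun z => y + z) (volume : Measure ℝ) = volume :=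
        (measurePreserving_add_left volume y).map_eq
      conv_rhs => rw [← h]
      rw [setLIntegral_map measurableSet_Ioi (hmx y) (measurable_const_add y)]
      congr 1
      ext z
      simp
    -- indicator form
    have hind : ∀ y ∈ Ioi (0:ℝ), (∫⁻ x in Ioi y, ENNReal.ofReal (A y * E y x / A x))
        = ∫⁻ x in Ioi (0:ℝ), (Ioi y).indicator (fun x => ENNReal.ofReal (A y * E y x / A x)) x := by
      intro y hy
      rw [setLIntegral_indicator measurableSet_Ioi]
      congr 1
      rw [Set.Ioi_inter_Ioi, max_eq_left (le_of_lt hy)]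
    have hcongr : (∫⁻ y in Ioi (0:ℝ), ∫⁻ z in Ioi (0:ℝ),
        ENNReal.ofReal (A y * E y (y + z) / A (y + z)))
        = ∫⁻ y in Ioi (0:ℝ), ∫⁻ x in Ioi (0:ℝ),
            (Ioi y).indicator (fun x => ENNReal.ofReal (A y * E y x / A x)) x := by
      apply setLIntegral_congr_fun measurableSet_Ioi
      intro y hy
      beta_reduce
      rw [htrans y, hind y hy]
    rw [hcongr]
    -- swap the two integrals
    have hmeasH : AEMeasurable
        (Function.uncurry fun y x => (Ioi y).indicator
          (fun x => ENNReal.ofReal (A y * E y x / A x)) x)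
        ((volume.restrict (Ioi (0:ℝ))).prod (volume.restrict (Ioi (0:ℝ)))) := by
      have heq : (Function.uncurry fun y x => (Ioi y).indicator
          (fun x => ENNReal.ofReal (A y * E y x / A x)) x) =
          Set.indicator {p : ℝ × ℝ | p.1 < p.2}
            (fun p => ENNReal.ofReal (A p.1 * E p.1 p.2 / A p.2)) := by
        funext p
        rcases p with ⟨y, x⟩
        by_cases h : y < x
        · simp [Function.uncurry, Set.indicator_apply, h, Set.mem_setOf_eq]
        · simp [Function.uncurry, Set.indicator_apply, h, Set.mem_setOf_eq]
      rw [heq]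
      exact ((hc2.measurable.ennreal_ofReal).indicator
        ((isOpen_lt continuous_fst continuous_snd).measurableSet)).aemeasurable
    rw [lintegral_lintegral_swap hmeasH]
    -- fixed x bound
    have hxbound : ∀ x ∈ Ioi (0:ℝ),
        (∫⁻ y in Ioi (0:ℝ), (Ioi y).indicator
          (fun x => ENNReal.ofReal (A y * E y x / A x)) x) ≤
        ENNReal.ofReal (1/2) * ENNReal.ofReal (A x)⁻¹ := by
      intro x hx
      have hswitch : ∀ y : ℝ, (Ioi y).indicator
          (fun x => ENNReal.ofReal (A y * E y x / A x)) x =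
          (Iio x).indicator (fun y => ENNReal.ofReal (A y * E y x / A x)) y := by
        intro y
        simp only [Set.indicator_apply, mem_Ioi, mem_Iio]
      calc (∫⁻ y in Ioi (0:ℝ), (Ioi y).indicator
            (fun x => ENNReal.ofReal (A y * E y x / A x)) x)
          = ∫⁻ y in Ioi (0:ℝ),
              (Iio x).indicator (fun y => ENNReal.ofReal (A y * E y x / A x)) y :=
            lintegral_congr fun y => hswitch y
        _ = ∫⁻ y in Iio x ∩ Ioi (0:ℝ), ENNReal.ofReal (A y * E y x / A x) :=
            setLIntegral_indicator measurableSet_Iio _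
        _ = ∫⁻ y in Ioo (0:ℝ) x, ENNReal.ofReal (A y * E y x / A x) := by
            have hset : Iio x ∩ Ioi (0:ℝ) = Ioo (0:ℝ) x := by
              ext t
              simp only [mem_inter_iff, mem_Iio, mem_Ioi, mem_Ioo]
              tauto
            rw [hset]
        _ = ∫⁻ y in Ioo (0:ℝ) x,
              ENNReal.ofReal (A y * E y x) * ENNReal.ofReal (A x)⁻¹ :=
            lintegral_congr fun y => by
              rw [div_eq_mul_inv, ENNReal.ofReal_mul' (inv_nonneg.mpr (hpos x).le)]
        _ = (∫⁻ y in Ioo (0:ℝ) x, ENNReal.ofReal (A y * E y x))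
              * ENNReal.ofReal (A x)⁻¹ := lintegral_mul_const' _ _ ENNReal.ofReal_ne_top
        _ ≤ ENNReal.ofReal (1/2) * ENNReal.ofReal (A x)⁻¹ := by
            apply mul_le_mul_left
            calc (∫⁻ y in Ioo (0:ℝ) x, ENNReal.ofReal (A y * E y x))
                ≤ ∫⁻ y in Ioc (0:ℝ) x, ENNReal.ofReal (A y * E y x) :=
                  lintegral_mono_set Ioo_subset_Ioc_self
              _ ≤ ENNReal.ofReal (1/2) := by
                  have hnn : ∀ y, 0 ≤ A y * E y x := fun y => (mul_pos (hpos _) (hEpos _ _)).le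
                  have hint : IntegrableOn (fun y => A y * E y x) (Ioc (0:ℝ) x) volume :=
                    Continuous.integrableOn_Ioc (hA.mul (hEx x))
                  rw [← ofReal_integral_eq_lintegral_ofReal hint (ae_of_all _ hnn)]
                  apply ENNReal.ofReal_le_ofReal
                  rw [← intervalIntegral.integral_of_le (le_of_lt hx), lem2]
                  have := (hEpos 0 x).le
                  linarith
    calc (∫⁻ x in Ioi (0:ℝ), ∫⁻ y in Ioi (0:ℝ), (Ioi y).indicator
          (fun x => ENNReal.ofReal (A y * E y x / A x)) x)
        ≤ ∫⁻ x in Ioi (0:ℝ), ENNReal.ofReal (1/2) * ENNReal.ofReal (A x)⁻¹ :=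
          setLIntegral_mono (measurable_const.mul hA.measurable.inv.ennreal_ofReal) hxbound
      _ = ENNReal.ofReal (1/2) * R := lintegral_const_mul' _ _ ENNReal.ofReal_ne_top
  -- the main estimate
  have key : 2 * (∫⁻ y in Ioi (0:ℝ), ∫⁻ z in Ioi (0:ℝ), ENNReal.ofReal (E y (y + z))) ≤ R := by
    calc 2 * (∫⁻ y in Ioi (0:ℝ), ∫⁻ z in Ioi (0:ℝ), ENNReal.ofReal (E y (y + z)))
        = ∫⁻ y in Ioi (0:ℝ), 2 * ∫⁻ z in Ioi (0:ℝ), ENNReal.ofReal (E y (y + z)) :=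
          (lintegral_const_mul' _ _ (by simp)).symm
      _ = ∫⁻ y in Ioi (0:ℝ), ∫⁻ z in Ioi (0:ℝ), 2 * ENNReal.ofReal (E y (y + z)) :=
          lintegral_congr fun y => (lintegral_const_mul' _ _ (by simp)).symm
      _ ≤ ∫⁻ y in Ioi (0:ℝ), ∫⁻ z in Ioi (0:ℝ),
            (ENNReal.ofReal (A (y + z) * E y (y + z) / A y) +
             ENNReal.ofReal (A y * E y (y + z) / A (y + z))) :=
          lintegral_mono fun y => lintegral_mono fun z => split y z
      _ = ∫⁻ y in Ioi (0:ℝ),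
            ((∫⁻ z in Ioi (0:ℝ), ENNReal.ofReal (A (y + z) * E y (y + z) / A y)) +
             (∫⁻ z in Ioi (0:ℝ), ENNReal.ofReal (A y * E y (y + z) / A (y + z)))) :=
          lintegral_congr fun y => lintegral_add_left
            ((hc1.comp (continuous_const.prodMk continuous_id)).measurable.ennreal_ofReal) _
      _ = (∫⁻ y in Ioi (0:ℝ), ∫⁻ z in Ioi (0:ℝ),
             ENNReal.ofReal (A (y + z) * E y (y + z) / A y)) +
          (∫⁻ y in Ioi (0:ℝ), ∫⁻ z in Ioi (0:ℝ),
             ENNReal.ofReal (A y * E y (y + z) / A (y + z))) := by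
          apply lintegral_add_left
          have : Measurable (Function.uncurry fun y z : ℝ =>
              ENNReal.ofReal (A (y + z) * E y (y + z) / A y)) := by
            have : (Function.uncurry fun y z : ℝ =>
                ENNReal.ofReal (A (y + z) * E y (y + z) / A y)) =
                fun p : ℝ × ℝ => ENNReal.ofReal (A (p.1 + p.2) * E p.1 (p.1 + p.2) / A p.1) := by
              funext p; rfl
            rw [this]
            exact hc1.measurable.ennreal_ofReal
          exact this.lintegral_prod_right'
      _ ≤ ENNReal.ofReal (1/2) * R + ENNReal.ofReal (1/2) * R := add_le_add term1 term2
      _ = R := by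
          rw [← add_mul, ← ENNReal.ofReal_add (by norm_num) (by norm_num)]
          norm_num
  -- rewrite the statement in terms of `E`
  have hrw : (∫⁻ y in Ioi (0:ℝ), ∫⁻ z in Ioi (0:ℝ),
      ENNReal.ofReal (Real.exp (-2 * ∫ u in y..(y + z), A u)))
      = ∫⁻ y in Ioi (0:ℝ), ∫⁻ z in Ioi (0:ℝ), ENNReal.ofReal (E y (y + z)) := by
    apply lintegral_congr
    intro y
    apply lintegral_congr
    intro z
    rw [hsub, hEapp]
  constructor
  · rw [hrw]; exact key
  · intro h
    rw [hrw]
    have h1 : (∫⁻ y in Ioi (0:ℝ), ∫⁻ z in Ioi (0:ℝ), ENNReal.ofReal (E y (y + z)))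
        ≤ 2 * (∫⁻ y in Ioi (0:ℝ), ∫⁻ z in Ioi (0:ℝ), ENNReal.ofReal (E y (y + z))) :=
      le_mul_of_one_le_left zero_le' (by norm_num)
    exact lt_of_le_of_lt (h1.trans key) h
end

section
/- Under Assumption (|b(x)| ≤ C(1+|x|^m), m > 1, η > (m−1)/2, d ≥ 2, 0 < α < 1), the quantity LV(x) = α(log|x|)^(α−1)( b(x)·x/|x|² − ½|x|^(2η)((d−2)/η + (1−α)/(η² log|x|)) ) satisfies LV(x) ≤ (log|x|)^(α−1)( c₁|x|^(m−1) − c₂ |x|^(2η)/log|x| ) for all |x| > max(2,R), for suitable constants c₁, c₂ > 0; consequently LV(x) → −∞ as |x| → ∞ and LV(x) < 0 for |x| sufficiently large. -/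
open Real Filter

private lemma stmt16_aux (α C η L T1 T2 P : ℝ) (hL : L ≠ 0) (hη : η ≠ 0) :
    α * P * (2 * C * T1 - (1 / 2) * T2 * ((1 - α) / (η ^ 2 * L)))
      = P * (2 * α * C * T1 - α * (1 - α) / (2 * η ^ 2) * T2 / L) := by
  field_simp

set_option maxHeartbeats 1000000 in
theorem stmt16 (d : ℕ) (hd : 2 ≤ d) (m η α C R : ℝ) (hm : 1 < m)
    (hη : (m - 1) / 2 < η) (hα1 : 0 < α) (hα2 : α < 1) (hC : 0 ≤ C) (hR : 0 < R)
    (b : EuclideanSpace ℝ (Fin d) → EuclideanSpace ℝ (Fin d))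
    (hb : ∀ x : EuclideanSpace ℝ (Fin d), ‖b x‖ ≤ C * (1 + ‖x‖ ^ m))
    (LV : EuclideanSpace ℝ (Fin d) → ℝ)
    (hLV : ∀ x : EuclideanSpace ℝ (Fin d), max 2 R < ‖x‖ →
      LV x = α * Real.log ‖x‖ ^ (α - 1) *
        ((inner ℝ (b x) x : ℝ) / ‖x‖ ^ 2
          - (1 / 2) * ‖x‖ ^ (2 * η) *
              (((d : ℝ) - 2) / η + (1 - α) / (η ^ 2 * Real.log ‖x‖)))) :
    (∃ c₁ > (0 : ℝ), ∃ c₂ > (0 : ℝ), ∀ x : EuclideanSpace ℝ (Fin d), max 2 R < ‖x‖ →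
        LV x ≤ Real.log ‖x‖ ^ (α - 1) *
          (c₁ * ‖x‖ ^ (m - 1) - c₂ * ‖x‖ ^ (2 * η) / Real.log ‖x‖)) ∧
      (∀ M : ℝ, ∃ r : ℝ, ∀ x : EuclideanSpace ℝ (Fin d), r < ‖x‖ → LV x ≤ M) ∧
      (∃ r : ℝ, ∀ x : EuclideanSpace ℝ (Fin d), r < ‖x‖ → LV x < 0) := by
  have hη0 : 0 < η := lt_trans (by linarith) hη
  have hε : 0 < 2 * η - (m - 1) := by linarith
  set ε : ℝ := 2 * η - (m - 1) with hεdef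
  set c₁ : ℝ := 2 * α * C + 1 with hc₁def
  set c₂ : ℝ := α * (1 - α) / (2 * η ^ 2) with hc₂def
  have hc₁ : 0 < c₁ := by
    have : 0 ≤ 2 * α * C := mul_nonneg (by linarith) hC
    linarith
  have hc₂ : 0 < c₂ := div_pos (mul_pos hα1 (by linarith)) (by positivity)
  set g : ℝ → ℝ := fun t =>
    Real.log t ^ (α - 1) * (c₁ * t ^ (m - 1) - c₂ * t ^ (2 * η) / Real.log t) with hgdef
  -- Pointwise bound
  have key : ∀ x : EuclideanSpace ℝ (Fin d), max 2 R < ‖x‖ → LV x ≤ g ‖x‖ := by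
    intro x hx
    set t : ℝ := ‖x‖ with htdef
    have ht2 : (2 : ℝ) < t := lt_of_le_of_lt (le_max_left _ _) hx
    have ht0 : (0 : ℝ) < t := by linarith
    have ht1 : (1 : ℝ) < t := by linarith
    have hL : 0 < Real.log t := Real.log_pos ht1
    set L : ℝ := Real.log t with hLdef
    have htm1 : (0 : ℝ) < t ^ (m - 1) := Real.rpow_pos_of_pos ht0 _
    have htη : (0 : ℝ) < t ^ (2 * η) := Real.rpow_pos_of_pos ht0 _
    have hLpow : (0 : ℝ) < L ^ (α - 1) := Real.rpow_pos_of_pos hL _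
    have e3 : t ^ (m - 1) * t = t ^ m := by
      rw [← Real.rpow_add_one (ne_of_gt ht0) (m - 1)]; norm_num
    have htm : (1 : ℝ) ≤ t ^ m := by
      have := Real.rpow_le_rpow_of_exponent_le ht1.le (show (0:ℝ) ≤ m by linarith)
      simpa [Real.rpow_zero] using this
    -- bound on the drift term
    have hBdd : (inner ℝ (b x) x : ℝ) / t ^ 2 ≤ 2 * C * t ^ (m - 1) := by
      rw [div_le_iff₀ (by positivity : (0:ℝ) < t ^ 2)]
      have hip : (inner ℝ (b x) x : ℝ) ≤ ‖b x‖ * t := real_inner_le_norm _ _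
      have hnb := hb x
      have hnb0 : 0 ≤ ‖b x‖ := norm_nonneg _
      have h1 : (inner ℝ (b x) x : ℝ) ≤ C * (1 + t ^ m) * t := by
        calc (inner ℝ (b x) x : ℝ) ≤ ‖b x‖ * t := hip
          _ ≤ C * (1 + t ^ m) * t := by
              apply mul_le_mul_of_nonneg_right _ ht0.le
              exact hnb
      have h2 : C * (1 + t ^ m) * t ≤ 2 * C * t ^ (m - 1) * t ^ 2 := by
        have hCt : 0 ≤ C * t := mul_nonneg hC ht0.le
        have e4 : t ^ (m - 1) * t ^ 2 = t ^ m * t := by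
          rw [pow_two, ← mul_assoc, e3]
        nlinarith [mul_nonneg hCt (sub_nonneg.2 htm)]
      linarith
    have hD : 0 ≤ ((d : ℝ) - 2) / η := by
      apply div_nonneg _ hη0.le
      have : (2 : ℝ) ≤ (d : ℝ) := by exact_mod_cast hd
      linarith
    have hLVx := hLV x hx
    rw [hLVx]
    have hE : (inner ℝ (b x) x : ℝ) / t ^ 2
        - (1 / 2) * t ^ (2 * η) * (((d : ℝ) - 2) / η + (1 - α) / (η ^ 2 * L))
        ≤ 2 * C * t ^ (m - 1) - (1 / 2) * t ^ (2 * η) * ((1 - α) / (η ^ 2 * L)) := by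
      have h5 : 0 ≤ (1 / 2) * t ^ (2 * η) * (((d : ℝ) - 2) / η) := by positivity
      nlinarith [hBdd]
    have step1 : α * L ^ (α - 1) *
        ((inner ℝ (b x) x : ℝ) / t ^ 2
          - (1 / 2) * t ^ (2 * η) * (((d : ℝ) - 2) / η + (1 - α) / (η ^ 2 * L)))
        ≤ α * L ^ (α - 1) *
          (2 * C * t ^ (m - 1) - (1 / 2) * t ^ (2 * η) * ((1 - α) / (η ^ 2 * L))) :=
      mul_le_mul_of_nonneg_left hE (by positivity)
    have e5 : α * L ^ (α - 1) *
        (2 * C * t ^ (m - 1) - (1 / 2) * t ^ (2 * η) * ((1 - α) / (η ^ 2 * L)))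
        = L ^ (α - 1) * (2 * α * C * t ^ (m - 1) - c₂ * t ^ (2 * η) / L) := by
      rw [hc₂def]
      exact stmt16_aux α C η L (t ^ (m - 1)) (t ^ (2 * η)) (L ^ (α - 1))
        (ne_of_gt hL) (ne_of_gt hη0)
    have step2 : L ^ (α - 1) * (2 * α * C * t ^ (m - 1) - c₂ * t ^ (2 * η) / L)
        ≤ L ^ (α - 1) * (c₁ * t ^ (m - 1) - c₂ * t ^ (2 * η) / L) := by
      apply mul_le_mul_of_nonneg_left _ hLpow.le
      rw [hc₁def]; nlinarith [htm1]
    calc α * L ^ (α - 1) *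
        ((inner ℝ (b x) x : ℝ) / t ^ 2
          - (1 / 2) * t ^ (2 * η) * (((d : ℝ) - 2) / η + (1 - α) / (η ^ 2 * L)))
        ≤ α * L ^ (α - 1) *
          (2 * C * t ^ (m - 1) - (1 / 2) * t ^ (2 * η) * ((1 - α) / (η ^ 2 * L))) := step1
      _ = L ^ (α - 1) * (2 * α * C * t ^ (m - 1) - c₂ * t ^ (2 * η) / L) := e5
      _ ≤ L ^ (α - 1) * (c₁ * t ^ (m - 1) - c₂ * t ^ (2 * η) / L) := step2
  -- Tendsto at bot
  have hA : Tendsto (fun t : ℝ => t ^ (m - 1) * Real.log t ^ (α - 2)) atTop atTop := by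
    have hlit := (isLittleO_log_rpow_rpow_atTop (2 - α)
      (show (0:ℝ) < (m - 1) / 2 by linarith)).def one_pos
    apply tendsto_atTop_mono' atTop _
      (tendsto_rpow_atTop (show (0:ℝ) < (m - 1) / 2 by linarith))
    filter_upwards [hlit, eventually_gt_atTop (1 : ℝ)] with t hle ht1
    have ht0 : (0 : ℝ) < t := by linarith
    have hL : 0 < Real.log t := Real.log_pos ht1
    have hpow2 : 0 < Real.log t ^ (2 - α) := Real.rpow_pos_of_pos hL _
    have hpowt : 0 < t ^ ((m - 1) / 2) := Real.rpow_pos_of_pos ht0 _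
    have h' : Real.log t ^ (2 - α) ≤ t ^ ((m - 1) / 2) := by
      have := hle
      simp only [norm_eq_abs, one_mul] at this
      rwa [abs_of_nonneg hpow2.le, abs_of_nonneg hpowt.le] at this
    have e5 : Real.log t ^ (α - 2) = (Real.log t ^ (2 - α))⁻¹ := by
      rw [show α - 2 = -(2 - α) by ring, Real.rpow_neg hL.le]
    have hinv : (t ^ ((m - 1) / 2))⁻¹ ≤ (Real.log t ^ (2 - α))⁻¹ :=
      inv_anti₀ hpow2 h'
    have e6 : t ^ (m - 1) * (t ^ ((m - 1) / 2))⁻¹ = t ^ ((m - 1) / 2) := by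
      rw [← Real.rpow_neg ht0.le, ← Real.rpow_add ht0]
      congr 1; ring
    calc t ^ ((m - 1) / 2) = t ^ (m - 1) * (t ^ ((m - 1) / 2))⁻¹ := e6.symm
      _ ≤ t ^ (m - 1) * Real.log t ^ (α - 2) := by
          rw [e5]
          exact mul_le_mul_of_nonneg_left hinv (Real.rpow_pos_of_pos ht0 _).le
  have hB : Tendsto (fun t : ℝ => c₁ * Real.log t - c₂ * t ^ ε) atTop atBot := by
    have hneg : Tendsto (fun t : ℝ => -(c₂ / 2 * t ^ ε)) atTop atBot :=
      tendsto_neg_atTop_atBot.comp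
        ((tendsto_rpow_atTop hε).const_mul_atTop (by positivity : (0:ℝ) < c₂ / 2))
    apply tendsto_atBot_mono' atTop _ hneg
    have hlog := (isLittleO_log_rpow_atTop hε).def
      (show (0:ℝ) < c₂ / (2 * c₁) by positivity)
    filter_upwards [hlog, eventually_gt_atTop (1 : ℝ)] with t hle ht1
    have ht0 : (0 : ℝ) < t := by linarith
    have hL : 0 < Real.log t := Real.log_pos ht1
    have hpt : 0 < t ^ ε := Real.rpow_pos_of_pos ht0 _
    have h' : Real.log t ≤ c₂ / (2 * c₁) * t ^ ε := by
      have := hle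
      simp only [norm_eq_abs] at this
      rwa [abs_of_nonneg hL.le, abs_of_nonneg hpt.le] at this
    have h'' : c₁ * Real.log t ≤ c₂ / 2 * t ^ ε := by
      have := mul_le_mul_of_nonneg_left h' hc₁.le
      have e : c₁ * (c₂ / (2 * c₁) * t ^ ε) = c₂ / 2 * t ^ ε := by
        field_simp
      linarith [e ▸ this]
    linarith
  have hAB := hA.atTop_mul_atBot₀ hB
  have hg : Tendsto g atTop atBot := by
    apply hAB.congr'
    filter_upwards [eventually_gt_atTop (1 : ℝ)] with t ht1
    have ht0 : (0 : ℝ) < t := by linarith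
    have hL : 0 < Real.log t := Real.log_pos ht1
    have e1 : Real.log t ^ (α - 2) = Real.log t ^ (α - 1) / Real.log t := by
      rw [show α - 2 = (α - 1) - 1 by ring, Real.rpow_sub hL, Real.rpow_one]
    have e2 : t ^ (2 * η) = t ^ (m - 1) * t ^ ε := by
      rw [← Real.rpow_add ht0]; congr 1; rw [hεdef]; ring
    simp only [hgdef, e1, e2]
    field_simp
  -- Assemble
  have part2 : ∀ M : ℝ, ∃ r : ℝ, ∀ x : EuclideanSpace ℝ (Fin d), r < ‖x‖ → LV x ≤ M := by
    intro M
    obtain ⟨r₀, hr₀⟩ := eventually_atTop.1 (hg.eventually (eventually_le_atBot M))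
    refine ⟨max r₀ (max 2 R), fun x hx => ?_⟩
    have hx1 : max 2 R < ‖x‖ := lt_of_le_of_lt (le_max_right _ _) hx
    have hx2 : r₀ ≤ ‖x‖ := le_of_lt (lt_of_le_of_lt (le_max_left _ _) hx)
    exact le_trans (key x hx1) (hr₀ _ hx2)
  refine ⟨⟨c₁, hc₁, c₂, hc₂, key⟩, part2, ?_⟩
  obtain ⟨r, hr⟩ := part2 (-1)
  exact ⟨r, fun x hx => lt_of_le_of_lt (hr x hx) (by norm_num)⟩
end
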